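/- arXiv:2406.02512 — 2 statements merged into one kernel-verified Lean document; each statement's English description precedes it below -/
import Mathlib

section
/- Let Γ^{(k)} be the branch sets with Γ^{(1)} = {0,1}, Γ^{(k)} = {0} ∪ (Γ^{(k-1)})^3, and let ℓ, the counting functions 𝔇(γ) defined by 𝔇(0)=1, 𝔇(1)=1, 𝔇((γ_1,γ_2,γ_3)) = ℓ((γ_1,γ_2,γ_3))·𝔇(γ_1)𝔇(γ_2)𝔇(γ_3), and the multi-index sets ℜ^{(k,γ)} defined by ℜ^{(k,0)} = {0}, ℜ^{(1,1)} = {(1,0,0),(0,1,0),(0,0,1)}, ℜ^{(k,(γ_1,γ_2,γ_3))} = (ℜ^{(k-1,γ_1)} × ℜ^{(k-1,γ_2)} × ℜ^{(k-1,γ_3)}) + 𝔢^{(k,γ)}, where 𝔢^{(k,γ)} consists of all multi-indices of length 2σ(γ) with |α| = 1. Then for every branch γ of the form (γ_1,γ_2,γ_3), the quantity P(γ) := ∑_{α ∈ ℜ^{(k,γ)}} ∏_j α_j! satisfies P(γ) = 3 ℓ(γ) P(γ_1) P(γ_2) P(γ_3). -/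
inductive BranchTree : Type
  | zero : BranchTree
  | one : BranchTree
  | node : BranchTree → BranchTree → BranchTree → BranchTree
  deriving DecidableEq

/-- 2σ: the length of multi-indices attached to a branch. -/
def sigma2 : BranchTree → ℕ
  | .zero => 1
  | .one => 3
  | .node a b c => sigma2 a + sigma2 b + sigma2 c

def ellB : BranchTree → ℕ
  | .zero => 0
  | .one => 1
  | .node a b c => 1 + ellB a + ellB b + ellB c

def Gamma : ℕ → Finset BranchTree
  | 0 => ∅
  | 1 => {BranchTree.zero, BranchTree.one}
  | (n + 2) => insert BranchTree.zero
      (((Gamma (n + 1)) ×ˢ (Gamma (n + 1)) ×ˢ (Gamma (n + 1))).image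
        fun p => BranchTree.node p.1 p.2.1 p.2.2)

/-- The unit multi-indices of length n (multi-indices α with |α| = 1), as lists. -/
def unitIdx (n : ℕ) : Multiset (List ℕ) :=
  (Multiset.range n).map fun j => (List.range n).map fun i => if i = j then 1 else 0

/-- The multi-index sets ℜ^{(k,γ)} (with multiplicity):
ℜ(0) = {0}, ℜ(1) = {(1,0,0),(0,1,0),(0,0,1)},
ℜ((γ₁,γ₂,γ₃)) = ℜ(γ₁)×ℜ(γ₂)×ℜ(γ₃) + {unit multi-indices of length 2σ}. -/
def Rset : BranchTree → Multiset (List ℕ)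
  | .zero => {[0]}
  | .one => {[1, 0, 0], [0, 1, 0], [0, 0, 1]}
  | .node a b c =>
      (Rset a).bind fun x => (Rset b).bind fun y => (Rset c).bind fun z =>
        (unitIdx (sigma2 (.node a b c))).map fun e =>
          List.zipWith (· + ·) (x ++ y ++ z) e

/-- P(γ) = ∑_{α ∈ ℜ(γ)} ∏ⱼ αⱼ!. -/
def Pfun (γ : BranchTree) : ℕ :=
  ((Rset γ).map fun α => (α.map Nat.factorial).prod).sum

/-! ### Auxiliary lemmas -/

lemma multiset_range_succ' (n : ℕ) :
    Multiset.range (n + 1) = 0 ::ₘ (Multiset.range n).map (· + 1) := by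
  have := List.range_succ_eq_map (n := n)
  simp [Multiset.range, this]

lemma unitIdx_succ (n : ℕ) :
    unitIdx (n + 1) = (1 :: List.replicate n 0) ::ₘ (unitIdx n).map (List.cons 0) := by
  unfold unitIdx
  rw [multiset_range_succ', Multiset.map_cons, Multiset.map_map, Multiset.map_map]
  congr 1
  · rw [List.range_succ_eq_map]
    simp [List.map_map, Function.comp, List.eq_replicate_iff]
  · apply Multiset.map_congr rfl
    intro j _
    rw [List.range_succ_eq_map]
    simp [List.map_map, Function.comp]

lemma zipWith_add_replicate_zero (l : List ℕ) :
    List.zipWith (· + ·) l (List.replicate l.length 0) = l := by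
  induction l with
  | nil => rfl
  | cons a t ih => simp [List.replicate_succ, ih]

lemma zipWith_add_sum : ∀ (l₁ l₂ : List ℕ), l₁.length = l₂.length →
    (List.zipWith (· + ·) l₁ l₂).sum = l₁.sum + l₂.sum
  | [], [], _ => by simp
  | [], _ :: _, h => by simp at h
  | _ :: _, [], h => by simp at h
  | a :: t, b :: s, h => by
    simp only [List.length_cons, Nat.succ.injEq] at h
    simp [zipWith_add_sum t s h]
    ring

lemma mem_unitIdx_length {n : ℕ} {e : List ℕ} (he : e ∈ unitIdx n) : e.length = n := by
  unfold unitIdx at he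
  rcases Multiset.mem_map.1 he with ⟨j, _, rfl⟩
  simp

lemma mem_unitIdx_sum : ∀ {n : ℕ} {e : List ℕ}, e ∈ unitIdx n → e.sum = 1 := by
  intro n
  induction n with
  | zero => intro e he; simp [unitIdx] at he
  | succ m ih =>
    intro e he
    rw [unitIdx_succ] at he
    rcases Multiset.mem_cons.1 he with h | h
    · subst h; simp
    · rcases Multiset.mem_map.1 h with ⟨f, hf, rfl⟩
      simp [ih hf]

lemma mem_Rset_length : ∀ (γ : BranchTree) (α : List ℕ), α ∈ Rset γ → α.length = sigma2 γ
  | .zero, α, h => by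
    simp only [Rset] at h
    rcases Multiset.mem_singleton.1 h with rfl
    rfl
  | .one, α, h => by
    simp only [Rset] at h
    fin_cases h <;> rfl
  | .node a b c, α, h => by
    simp only [Rset] at h
    rcases Multiset.mem_bind.1 h with ⟨x, hx, h⟩
    rcases Multiset.mem_bind.1 h with ⟨y, hy, h⟩
    rcases Multiset.mem_bind.1 h with ⟨z, hz, h⟩
    rcases Multiset.mem_map.1 h with ⟨e, he, rfl⟩
    rw [List.length_zipWith, mem_unitIdx_length he]
    simp only [List.length_append, mem_Rset_length a x hx, mem_Rset_length b y hy,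
      mem_Rset_length c z hz, sigma2]
    omega

lemma mem_Rset_sum : ∀ (γ : BranchTree) (α : List ℕ), α ∈ Rset γ → α.sum = ellB γ
  | .zero, α, h => by
    simp only [Rset] at h
    rcases Multiset.mem_singleton.1 h with rfl
    rfl
  | .one, α, h => by
    simp only [Rset] at h
    fin_cases h <;> rfl
  | .node a b c, α, h => by
    simp only [Rset] at h
    rcases Multiset.mem_bind.1 h with ⟨x, hx, h⟩
    rcases Multiset.mem_bind.1 h with ⟨y, hy, h⟩
    rcases Multiset.mem_bind.1 h with ⟨z, hz, h⟩
    rcases Multiset.mem_map.1 h with ⟨e, he, rfl⟩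
    rw [zipWith_add_sum _ _ (by
      rw [mem_unitIdx_length he]
      simp only [List.length_append, mem_Rset_length a x hx, mem_Rset_length b y hy,
        mem_Rset_length c z hz, sigma2])]
    simp only [List.sum_append, mem_unitIdx_sum he, mem_Rset_sum a x hx, mem_Rset_sum b y hy,
      mem_Rset_sum c z hz, ellB]
    omega

lemma sigma_Gamma : ∀ (k : ℕ) (γ : BranchTree), γ ∈ Gamma k → sigma2 γ = 2 * ellB γ + 1
  | 0, γ, h => by simp [Gamma] at h
  | 1, γ, h => by
    simp only [Gamma, Finset.mem_insert, Finset.mem_singleton] at h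
    rcases h with rfl | rfl <;> rfl
  | (n + 2), γ, h => by
    simp only [Gamma, Finset.mem_insert, Finset.mem_image, Finset.mem_product] at h
    rcases h with rfl | ⟨⟨p, q, r⟩, ⟨hp, hq, hr⟩, rfl⟩
    · rfl
    · simp only [sigma2, ellB, sigma_Gamma (n + 1) p hp, sigma_Gamma (n + 1) q hq,
        sigma_Gamma (n + 1) r hr]
      ring

/-- The key computation: summing over all unit shifts of a multi-index. -/
lemma key_sum (x : List ℕ) :
    ((unitIdx x.length).map fun e =>
        ((List.zipWith (· + ·) x e).map Nat.factorial).prod).sum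
      = (x.sum + x.length) * (x.map Nat.factorial).prod := by
  induction x with
  | nil => simp [unitIdx]
  | cons a t ih =>
    rw [List.length_cons, unitIdx_succ, Multiset.map_cons, Multiset.sum_cons,
      Multiset.map_map]
    have h1 : List.zipWith (· + ·) (a :: t) (1 :: List.replicate t.length 0)
        = (a + 1) :: t := by
      simp [zipWith_add_replicate_zero]
    rw [h1]
    have h2 : ((unitIdx t.length).map
          ((fun e => ((List.zipWith (· + ·) (a :: t) e).map Nat.factorial).prod) ∘
            List.cons 0)).sum
        = Nat.factorial a *
          ((unitIdx t.length).map fun e =>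
            ((List.zipWith (· + ·) t e).map Nat.factorial).prod).sum := by
      rw [← Multiset.sum_map_mul_left]
      apply congrArg
      apply congrArg _
      apply Multiset.map_congr rfl
      intro e _
      simp [Function.comp]
    rw [h2, ih]
    simp only [List.map_cons, List.prod_cons, List.sum_cons, List.length_cons,
      Nat.factorial_succ]
    ring

theorem P_node_recursion (k : ℕ) (hk : 2 ≤ k) (a b c : BranchTree)
    (ha : a ∈ Gamma (k - 1)) (hb : b ∈ Gamma (k - 1)) (hc : c ∈ Gamma (k - 1)) :
    Pfun (BranchTree.node a b c) =
      3 * ellB (BranchTree.node a b c) * (Pfun a * Pfun b * Pfun c) := by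
  have hsa := sigma_Gamma _ _ ha
  have hsb := sigma_Gamma _ _ hb
  have hsc := sigma_Gamma _ _ hc
  set C := 3 * ellB (BranchTree.node a b c) with hC
  have key3 : ∀ x ∈ Rset a, ∀ y ∈ Rset b, ∀ z ∈ Rset c,
      ((unitIdx (sigma2 (BranchTree.node a b c))).map fun e =>
          ((List.zipWith (· + ·) (x ++ y ++ z) e).map Nat.factorial).prod).sum
        = C * ((x.map Nat.factorial).prod * (y.map Nat.factorial).prod *
            (z.map Nat.factorial).prod) := by
    intro x hx y hy z hz
    have hlen : (x ++ y ++ z).length = sigma2 (BranchTree.node a b c) := by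
      simp only [List.length_append, mem_Rset_length a x hx, mem_Rset_length b y hy,
        mem_Rset_length c z hz, sigma2]
    rw [← hlen, key_sum, hlen]
    have hsum : (x ++ y ++ z).sum = ellB a + ellB b + ellB c := by
      simp only [List.sum_append, mem_Rset_sum a x hx, mem_Rset_sum b y hy,
        mem_Rset_sum c z hz]
    have hprod : ((x ++ y ++ z).map Nat.factorial).prod
        = (x.map Nat.factorial).prod * (y.map Nat.factorial).prod *
          (z.map Nat.factorial).prod := by
      simp only [List.map_append, List.prod_append]
    rw [hsum, hprod, hC]
    have hs : sigma2 (BranchTree.node a b c) = 2 * (ellB a + ellB b + ellB c) + 3 := by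
      simp only [sigma2, hsa, hsb, hsc]; ring
    rw [hs]
    simp only [ellB]
    ring
  show (((Rset a).bind fun x => (Rset b).bind fun y => (Rset c).bind fun z =>
        (unitIdx (sigma2 (.node a b c))).map fun e =>
          List.zipWith (· + ·) (x ++ y ++ z) e).map
      fun α => (α.map Nat.factorial).prod).sum = _
  rw [Multiset.map_bind, Multiset.sum_bind]
  have stepx : ∀ x ∈ Rset a,
      (((Rset b).bind fun y => (Rset c).bind fun z =>
        (unitIdx (sigma2 (.node a b c))).map fun e =>
          List.zipWith (· + ·) (x ++ y ++ z) e).map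
        fun α => (α.map Nat.factorial).prod).sum
      = (C * (Pfun b * Pfun c)) * (x.map Nat.factorial).prod := by
    intro x hx
    rw [Multiset.map_bind, Multiset.sum_bind]
    have stepy : ∀ y ∈ Rset b,
        (((Rset c).bind fun z =>
          (unitIdx (sigma2 (.node a b c))).map fun e =>
            List.zipWith (· + ·) (x ++ y ++ z) e).map
          fun α => (α.map Nat.factorial).prod).sum
        = (C * ((x.map Nat.factorial).prod * Pfun c)) * (y.map Nat.factorial).prod := by
      intro y hy
      rw [Multiset.map_bind, Multiset.sum_bind]
      have stepz : ∀ z ∈ Rset c,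
          (((unitIdx (sigma2 (.node a b c))).map fun e =>
            List.zipWith (· + ·) (x ++ y ++ z) e).map
            fun α => (α.map Nat.factorial).prod).sum
          = (C * ((x.map Nat.factorial).prod * (y.map Nat.factorial).prod)) *
              (z.map Nat.factorial).prod := by
        intro z hz
        rw [Multiset.map_map]
        have h := key3 x hx y hy z hz
        simp only [Function.comp] at h ⊢
        rw [h]; ring
      rw [Multiset.map_congr rfl stepz, Multiset.sum_map_mul_left]
      show _ * Pfun c = _
      ring
    rw [Multiset.map_congr rfl stepy, Multiset.sum_map_mul_left]
    show _ * Pfun b = _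
    ring
  rw [Multiset.map_congr rfl stepx, Multiset.sum_map_mul_left]
  show _ * Pfun a = _
  ring
end

section
/- Let ν ≥ 1, 0 < κ ≤ 1, and let 𝔠, 𝔡 : [0,T) × ℤ^ν → ℂ both satisfy: (i) 𝔠(0,n) = 𝔡(0,n) for all n; (ii) there is C₁ > 0 with |𝔠(t,n)|, |𝔡(t,n)| ≤ C₁ e^{-ρ|n|} for all (t,n), where ρ = κ/2; (iii) both satisfy the integral equation 𝔣(t,n) = e^{-i⟨n⟩²t}𝔣(0,n) + i⟨n⟩∫₀ᵗ e^{-i⟨n⟩²(t−s)} ∑_{n_1−n_2+n_3=n} 𝔣(s,n_1) conj(𝔣(s,n_2)) 𝔣(s,n_3) ds. Then for all t with 0 ≤ t < min{T, 1/(36 C₁² e (12/ρ)^{2ν+1} |ω|)} and all n ∈ ℤ^ν, one has 𝔠(t,n) = 𝔡(t,n). -/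
abbrev Triple (ν : ℕ) (n : Fin ν → ℤ) : Type :=
  {p : (Fin ν → ℤ) × (Fin ν → ℤ) × (Fin ν → ℤ) // p.1 - p.2.1 + p.2.2 = n}

noncomputable def frq (ν : ℕ) (ω : Fin ν → ℝ) (n : Fin ν → ℤ) : ℝ :=
  ∑ j, (n j : ℝ) * ω j

/-- ℓ¹ norm on ℤ^ν. -/
noncomputable def l1 (ν : ℕ) (n : Fin ν → ℤ) : ℝ := ∑ j, |(n j : ℝ)|

noncomputable def NLterm (ν : ℕ) (c : (Fin ν → ℤ) → ℂ) (n : Fin ν → ℤ) : ℂ :=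
  ∑' p : Triple ν n,
    c p.val.1 *
      (starRingEnd ℂ) (c p.val.2.1) *
      c p.val.2.2

open MeasureTheory Set Filter Topology

set_option maxHeartbeats 1000000

section Helpers

lemma dNLS_l1_nonneg (ν : ℕ) (n : Fin ν → ℤ) : 0 ≤ l1 ν n :=
  Finset.sum_nonneg fun _ _ => abs_nonneg _

lemma dNLS_l1_triple {ν : ℕ} {p1 p2 p3 n : Fin ν → ℤ} (h : p1 - p2 + p3 = n) :
    l1 ν n ≤ l1 ν p1 + l1 ν p2 + l1 ν p3 := by
  unfold l1
  rw [← Finset.sum_add_distrib, ← Finset.sum_add_distrib]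
  refine Finset.sum_le_sum fun j _ => ?_
  have hj : n j = p1 j - p2 j + p3 j := by rw [← h]; simp
  rw [hj]
  push_cast
  calc |(p1 j : ℝ) - p2 j + p3 j| ≤ |(p1 j : ℝ) - p2 j| + |(p3 j : ℝ)| := abs_add_le _ _
    _ ≤ |(p1 j : ℝ)| + |(p2 j : ℝ)| + |(p3 j : ℝ)| := by
        have := abs_sub (p1 j : ℝ) (p2 j : ℝ)
        linarith [abs_sub_abs_le_abs_sub (p1 j : ℝ) (p2 j : ℝ), abs_sub (p1 j : ℝ) (p2 j)]

lemma dNLS_frq_le (ν : ℕ) (ω : Fin ν → ℝ) (n : Fin ν → ℤ) :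
    |frq ν ω n| ≤ (∑ j, |ω j|) * l1 ν n := by
  unfold frq l1
  calc |∑ j, (n j : ℝ) * ω j| ≤ ∑ j, |(n j : ℝ) * ω j| := Finset.abs_sum_le_sum_abs _ _
    _ ≤ ∑ j, (∑ i, |ω i|) * |(n j : ℝ)| := by
        refine Finset.sum_le_sum fun j _ => ?_
        rw [abs_mul]
        have h1 : |ω j| ≤ ∑ i, |ω i| :=
          Finset.single_le_sum (fun i _ => abs_nonneg (ω i)) (Finset.mem_univ j)
        calc |(n j : ℝ)| * |ω j| ≤ |(n j : ℝ)| * ∑ i, |ω i| := by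
              exact mul_le_mul_of_nonneg_left h1 (abs_nonneg _)
          _ = (∑ i, |ω i|) * |(n j : ℝ)| := by ring
    _ = (∑ j, |ω j|) * ∑ j, |(n j : ℝ)| := by rw [← Finset.mul_sum]

lemma dNLS_sumZ {σ : ℝ} (hσ : 0 < σ) :
    Summable (fun m : ℤ => Real.exp (-σ * |(m : ℝ)|)) := by
  have hr0 : (0:ℝ) ≤ Real.exp (-σ) := Real.exp_nonneg _
  have hr1 : Real.exp (-σ) < 1 := Real.exp_lt_one_iff.2 (by linarith)
  have hgeo : Summable (fun k : ℕ => (Real.exp (-σ))^k) := summable_geometric_of_lt_one hr0 hr1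
  refine Summable.of_nat_of_neg_add_one ?_ ?_
  · refine hgeo.congr fun k => ?_
    rw [← Real.exp_nat_mul]
    congr 1
    simp [abs_of_nonneg (by positivity : (0:ℝ) ≤ (k:ℝ))]
    ring
  · refine (hgeo.mul_left (Real.exp (-σ))).congr fun k => ?_
    rw [← Real.exp_nat_mul, ← Real.exp_add]
    congr 1
    have : |((-((k:ℤ) + 1) : ℤ) : ℝ)| = (k : ℝ) + 1 := by
      push_cast
      rw [abs_neg, abs_of_nonneg (by positivity)]
    rw [this]
    ring

lemma dNLS_tsumZ {σ : ℝ} (hσ : 0 < σ) (hσ' : σ ≤ 1/2) :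
    ∑' m : ℤ, Real.exp (-σ * |(m : ℝ)|) ≤ 3 / σ := by
  have hr0 : (0:ℝ) ≤ Real.exp (-σ) := Real.exp_nonneg _
  have hr1 : Real.exp (-σ) < 1 := Real.exp_lt_one_iff.2 (by linarith)
  have hgeo : Summable (fun k : ℕ => (Real.exp (-σ))^k) := summable_geometric_of_lt_one hr0 hr1
  have h1 : Summable (fun k : ℕ => Real.exp (-σ * |((k : ℤ) : ℝ)|)) := by
    refine hgeo.congr fun k => ?_
    rw [← Real.exp_nat_mul]; congr 1
    simp [abs_of_nonneg (by positivity : (0:ℝ) ≤ (k:ℝ))]; ring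
  have h2 : Summable (fun k : ℕ => Real.exp (-σ * |((-((k:ℤ) + 1) : ℤ) : ℝ)|)) := by
    refine (hgeo.mul_left (Real.exp (-σ))).congr fun k => ?_
    rw [← Real.exp_nat_mul, ← Real.exp_add]; congr 1
    have : |((-((k:ℤ) + 1) : ℤ) : ℝ)| = (k : ℝ) + 1 := by
      push_cast; rw [abs_neg, abs_of_nonneg (by positivity)]
    rw [this]; ring
  have hsplit : (∑' m : ℤ, Real.exp (-σ * |(m : ℝ)|)) =
      (∑' k : ℕ, Real.exp (-σ * |((k : ℤ) : ℝ)|)) +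
      (∑' k : ℕ, Real.exp (-σ * |((-((k:ℤ) + 1) : ℤ) : ℝ)|)) :=
    tsum_of_nat_of_neg_add_one (f := fun m : ℤ => Real.exp (-σ * |(m : ℝ)|)) h1 h2
  rw [hsplit]
  have hts : ∑' k : ℕ, (Real.exp (-σ))^k = (1 - Real.exp (-σ))⁻¹ :=
    tsum_geometric_of_lt_one hr0 hr1
  have hb1 : ∑' k : ℕ, Real.exp (-σ * |((k : ℤ) : ℝ)|) = (1 - Real.exp (-σ))⁻¹ := by
    rw [← hts]
    congr 1
    funext k
    rw [← Real.exp_nat_mul]; congr 1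
    simp [abs_of_nonneg (by positivity : (0:ℝ) ≤ (k:ℝ))]; ring
  have hb2 : ∑' k : ℕ, Real.exp (-σ * |((-((k:ℤ) + 1) : ℤ) : ℝ)|) ≤ (1 - Real.exp (-σ))⁻¹ := by
    rw [← hts]
    refine Summable.tsum_le_tsum (fun k => ?_) h2 hgeo
    rw [← Real.exp_nat_mul]
    have : |((-((k:ℤ) + 1) : ℤ) : ℝ)| = (k : ℝ) + 1 := by
      push_cast; rw [abs_neg, abs_of_nonneg (by positivity)]
    rw [this]
    refine Real.exp_le_exp.2 ?_
    nlinarith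
  have hkey : 1 - Real.exp (-σ) ≥ 2*σ/3 := by
    have he : 1 + σ ≤ Real.exp σ := by linarith [Real.add_one_le_exp σ]
    have hepos : (0:ℝ) < Real.exp σ := Real.exp_pos _
    have hinv : Real.exp (-σ) = (Real.exp σ)⁻¹ := Real.exp_neg σ
    rw [hinv]
    have h1σ : (0:ℝ) < 1 + σ := by linarith
    have : (Real.exp σ)⁻¹ ≤ (1 + σ)⁻¹ := by
      exact inv_anti₀ h1σ he
    have h2 : (1 + σ)⁻¹ ≤ 1 - 2*σ/3 := by
      rw [inv_le_iff_one_le_mul₀ h1σ]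
      nlinarith
    linarith
  have hpos : 0 < 1 - Real.exp (-σ) := by linarith [hkey, hσ]
  have : (1 - Real.exp (-σ))⁻¹ ≤ (2*σ/3)⁻¹ := by
    exact inv_anti₀ (by positivity) hkey
  rw [hb1]
  have h32 : (2*σ/3)⁻¹ = 3/(2*σ) := by field_simp
  calc (1 - Real.exp (-σ))⁻¹ + ∑' k : ℕ, Real.exp (-σ * |((-((k:ℤ) + 1) : ℤ) : ℝ)|)
      ≤ (1 - Real.exp (-σ))⁻¹ + (1 - Real.exp (-σ))⁻¹ := by linarith
    _ ≤ (2*σ/3)⁻¹ + (2*σ/3)⁻¹ := by linarith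
    _ = 3/σ := by rw [h32]; field_simp; ring

lemma dNLS_tsumProd {α β : Type*} {f : α → ℝ} {g : β → ℝ}
    (hf : Summable f) (hg : Summable g)
    (hfg : Summable (fun p : α × β => f p.1 * g p.2)) :
    ∑' p : α × β, f p.1 * g p.2 = (∑' a, f a) * (∑' b, g b) := by
  rw [Summable.tsum_prod' hfg fun a => hg.mul_left (f a)]
  calc ∑' a, ∑' b, f a * g b = ∑' a, f a * ∑' b, g b := by
        congr 1; funext a; exact tsum_mul_left
    _ = (∑' a, f a) * (∑' b, g b) := tsum_mul_right

lemma dNLS_consEquiv_l1 (k : ℕ) {σ : ℝ} (p : ℤ × (Fin k → ℤ)) :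
    Real.exp (-σ * l1 (k+1) ((Fin.consEquiv (fun _ => ℤ)) p)) =
      Real.exp (-σ * |(p.1 : ℝ)|) * Real.exp (-σ * l1 k p.2) := by
  rcases p with ⟨x, m⟩
  rw [← Real.exp_add]
  congr 1
  have hl : l1 (k+1) ((Fin.consEquiv (fun _ => ℤ)) (x, m)) = |(x : ℝ)| + l1 k m := by
    show l1 (k+1) (Fin.cons x m) = _
    unfold l1
    rw [Fin.sum_univ_succ]
    simp
  rw [hl]; ring

lemma dNLS_sumPi (k : ℕ) {σ : ℝ} (hσ : 0 < σ) :
    Summable (fun m : Fin k → ℤ => Real.exp (-σ * l1 k m)) := by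
  induction k with
  | zero =>
    exact .of_finite
  | succ k ih =>
    have hz := dNLS_sumZ hσ
    have hprod : Summable (fun p : ℤ × (Fin k → ℤ) =>
        Real.exp (-σ * |(p.1 : ℝ)|) * Real.exp (-σ * l1 k p.2)) :=
      hz.mul_of_nonneg ih (fun _ => Real.exp_nonneg _) (fun _ => Real.exp_nonneg _)
    refine ((Fin.consEquiv (fun _ : Fin (k+1) => ℤ)).summable_iff).1 ?_
    exact hprod.congr fun p => (dNLS_consEquiv_l1 k p).symm

lemma dNLS_tsumPi (k : ℕ) {σ : ℝ} (hσ : 0 < σ) (hσ' : σ ≤ 1/2) :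
    ∑' m : Fin k → ℤ, Real.exp (-σ * l1 k m) ≤ (3/σ)^k := by
  induction k with
  | zero =>
    have : ∑' m : Fin 0 → ℤ, Real.exp (-σ * l1 0 m) = 1 := by
      rw [tsum_eq_single (default : Fin 0 → ℤ) (fun b hb => absurd (Subsingleton.elim b default) hb)]
      simp [l1]
    rw [this]; norm_num
  | succ k ih =>
    have hz := dNLS_sumZ hσ
    have hpi := dNLS_sumPi k hσ
    have hprod : Summable (fun p : ℤ × (Fin k → ℤ) =>
        Real.exp (-σ * |(p.1 : ℝ)|) * Real.exp (-σ * l1 k p.2)) :=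
      hz.mul_of_nonneg hpi (fun _ => Real.exp_nonneg _) (fun _ => Real.exp_nonneg _)
    rw [← Equiv.tsum_eq (Fin.consEquiv (fun _ : Fin (k+1) => ℤ))
      (fun m : Fin (k+1) → ℤ => Real.exp (-σ * l1 (k+1) m))]
    rw [tsum_congr (dNLS_consEquiv_l1 k)]
    calc ∑' p : ℤ × (Fin k → ℤ), Real.exp (-σ * |(p.1 : ℝ)|) * Real.exp (-σ * l1 k p.2)
        = (∑' m : ℤ, Real.exp (-σ * |(m : ℝ)|)) * (∑' m : Fin k → ℤ, Real.exp (-σ * l1 k m)) :=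
          dNLS_tsumProd hz hpi hprod
      _ ≤ (3/σ) * (3/σ)^k := by
          refine mul_le_mul (dNLS_tsumZ hσ hσ') ih (tsum_nonneg fun _ => Real.exp_nonneg _) ?_
          positivity
      _ = (3/σ)^(k+1) := by ring

/-- Equivalences parametrizing triples by two free slots. -/
def dNLS_e1 (ν : ℕ) (n : Fin ν → ℤ) : ((Fin ν → ℤ) × (Fin ν → ℤ)) ≃ Triple ν n where
  toFun ab := ⟨(n + ab.1 - ab.2, ab.1, ab.2), by
    funext j; simp only [Pi.add_apply, Pi.sub_apply]; ring⟩
  invFun p := (p.val.2.1, p.val.2.2)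
  left_inv ab := rfl
  right_inv p := by
    rcases p with ⟨⟨p1, p2, p3⟩, hp⟩
    refine Subtype.ext (Prod.ext ?_ rfl)
    funext j
    have := congrFun hp j
    simp only [Pi.add_apply, Pi.sub_apply] at this ⊢
    omega

def dNLS_e2 (ν : ℕ) (n : Fin ν → ℤ) : ((Fin ν → ℤ) × (Fin ν → ℤ)) ≃ Triple ν n where
  toFun ab := ⟨(ab.1, ab.1 + ab.2 - n, ab.2), by
    funext j; simp only [Pi.add_apply, Pi.sub_apply]; ring⟩
  invFun p := (p.val.1, p.val.2.2)
  left_inv ab := rfl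
  right_inv p := by
    rcases p with ⟨⟨p1, p2, p3⟩, hp⟩
    refine Subtype.ext (Prod.ext rfl (Prod.ext ?_ rfl))
    funext j
    have := congrFun hp j
    simp only [Pi.add_apply, Pi.sub_apply] at this ⊢
    omega

def dNLS_e3 (ν : ℕ) (n : Fin ν → ℤ) : ((Fin ν → ℤ) × (Fin ν → ℤ)) ≃ Triple ν n where
  toFun ab := ⟨(ab.1, ab.2, n - ab.1 + ab.2), by
    funext j; simp only [Pi.add_apply, Pi.sub_apply]; ring⟩
  invFun p := (p.val.1, p.val.2.1)
  left_inv ab := rfl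
  right_inv p := by
    rcases p with ⟨⟨p1, p2, p3⟩, hp⟩
    refine Subtype.ext (Prod.ext rfl (Prod.ext rfl ?_))
    funext j
    have := congrFun hp j
    simp only [Pi.add_apply, Pi.sub_apply] at this ⊢
    omega

/-- The key exponent inequality. -/
lemma dNLS_expkey {ρ α x1 x2 x3 xn : ℝ} (hα0 : 0 ≤ α) (hαρ : α + ρ/4 ≤ ρ)
    (h1 : 0 ≤ x1) (h2 : 0 ≤ x2) (h3 : 0 ≤ x3) (htri : xn ≤ x1 + x2 + x3) :
    Real.exp (-α * x1) * (Real.exp (-ρ * x2) * Real.exp (-ρ * x3)) ≤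
      Real.exp (-α * xn) * (Real.exp (-(ρ/4) * x2) * Real.exp (-(ρ/4) * x3)) := by
  rw [← Real.exp_add, ← Real.exp_add, ← Real.exp_add, ← Real.exp_add]
  refine Real.exp_le_exp.2 ?_
  nlinarith

/-- Crude summability over triples (no decay on slot 1). -/
lemma dNLS_tri0 (ν : ℕ) {ρ K : ℝ} (hρ : 0 < ρ) (hK : 0 ≤ K) (n : Fin ν → ℤ) :
    Summable (fun p : Triple ν n =>
      K * (Real.exp (-ρ * l1 ν p.val.2.1) * Real.exp (-ρ * l1 ν p.val.2.2))) ∧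
    ∑' p : Triple ν n, K * (Real.exp (-ρ * l1 ν p.val.2.1) * Real.exp (-ρ * l1 ν p.val.2.2)) ≤
      K * (∑' m : Fin ν → ℤ, Real.exp (-(ρ/4) * l1 ν m))^2 := by
  have hσ : (0:ℝ) < ρ/4 := by linarith
  have hpi := dNLS_sumPi ν hσ
  have hpiρ := dNLS_sumPi ν hρ
  have hprod : Summable (fun q : (Fin ν → ℤ) × (Fin ν → ℤ) =>
      K * (Real.exp (-ρ * l1 ν q.1) * Real.exp (-ρ * l1 ν q.2))) :=
    (hpiρ.mul_of_nonneg hpiρ (fun _ => Real.exp_nonneg _) (fun _ => Real.exp_nonneg _)).mul_left K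
  have hprod4 : Summable (fun q : (Fin ν → ℤ) × (Fin ν → ℤ) =>
      K * (Real.exp (-(ρ/4) * l1 ν q.1) * Real.exp (-(ρ/4) * l1 ν q.2))) :=
    (hpi.mul_of_nonneg hpi (fun _ => Real.exp_nonneg _) (fun _ => Real.exp_nonneg _)).mul_left K
  have hle : ∀ q : (Fin ν → ℤ) × (Fin ν → ℤ),
      K * (Real.exp (-ρ * l1 ν q.1) * Real.exp (-ρ * l1 ν q.2)) ≤
      K * (Real.exp (-(ρ/4) * l1 ν q.1) * Real.exp (-(ρ/4) * l1 ν q.2)) := by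
    intro q
    refine mul_le_mul_of_nonneg_left ?_ hK
    refine mul_le_mul ?_ ?_ (Real.exp_nonneg _) (Real.exp_nonneg _) <;>
      · refine Real.exp_le_exp.2 ?_
        nlinarith [dNLS_l1_nonneg ν q.1, dNLS_l1_nonneg ν q.2]
  constructor
  · exact ((dNLS_e1 ν n).summable_iff).1 (hprod.congr fun q => rfl)
  · rw [← Equiv.tsum_eq (dNLS_e1 ν n) (fun p : Triple ν n =>
      K * (Real.exp (-ρ * l1 ν p.val.2.1) * Real.exp (-ρ * l1 ν p.val.2.2)))]
    calc ∑' q : (Fin ν → ℤ) × (Fin ν → ℤ),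
          K * (Real.exp (-ρ * l1 ν q.1) * Real.exp (-ρ * l1 ν q.2))
        ≤ ∑' q : (Fin ν → ℤ) × (Fin ν → ℤ),
          K * (Real.exp (-(ρ/4) * l1 ν q.1) * Real.exp (-(ρ/4) * l1 ν q.2)) :=
          Summable.tsum_le_tsum hle hprod hprod4
      _ = K * ((∑' m, Real.exp (-(ρ/4) * l1 ν m)) * (∑' m, Real.exp (-(ρ/4) * l1 ν m))) := by
          rw [show (fun q : (Fin ν → ℤ) × (Fin ν → ℤ) =>
            K * (Real.exp (-(ρ/4) * l1 ν q.1) * Real.exp (-(ρ/4) * l1 ν q.2))) =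
            (fun q => K * (Real.exp (-(ρ/4) * l1 ν q.1) * Real.exp (-(ρ/4) * l1 ν q.2))) from rfl]
          rw [tsum_mul_left, dNLS_tsumProd hpi hpi
            (hpi.mul_of_nonneg hpi (fun _ => Real.exp_nonneg _) (fun _ => Real.exp_nonneg _))]
      _ = K * (∑' m : Fin ν → ℤ, Real.exp (-(ρ/4) * l1 ν m))^2 := by ring

section triSlots

variable (ν : ℕ) {ρ α K : ℝ}

/-- Summability and bound over triples: α-decay on slot 1. -/
lemma dNLS_tri1 (hρ : 0 < ρ) (hα0 : 0 ≤ α) (hαρ : α + ρ/4 ≤ ρ)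
    (hK : 0 ≤ K) (n : Fin ν → ℤ) :
    Summable (fun p : Triple ν n =>
      K * (Real.exp (-α * l1 ν p.val.1) *
        (Real.exp (-ρ * l1 ν p.val.2.1) * Real.exp (-ρ * l1 ν p.val.2.2)))) ∧
    ∑' p : Triple ν n, K * (Real.exp (-α * l1 ν p.val.1) *
        (Real.exp (-ρ * l1 ν p.val.2.1) * Real.exp (-ρ * l1 ν p.val.2.2))) ≤
      K * Real.exp (-α * l1 ν n) * (∑' m : Fin ν → ℤ, Real.exp (-(ρ/4) * l1 ν m))^2 := by
  have hσ : (0:ℝ) < ρ/4 := by linarith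
  have hpi := dNLS_sumPi ν hσ
  have hprod4 : Summable (fun q : (Fin ν → ℤ) × (Fin ν → ℤ) =>
      Real.exp (-(ρ/4) * l1 ν q.1) * Real.exp (-(ρ/4) * l1 ν q.2)) :=
    hpi.mul_of_nonneg hpi (fun _ => Real.exp_nonneg _) (fun _ => Real.exp_nonneg _)
  have hG : Summable (fun q : (Fin ν → ℤ) × (Fin ν → ℤ) =>
      (K * Real.exp (-α * l1 ν n)) *
        (Real.exp (-(ρ/4) * l1 ν q.1) * Real.exp (-(ρ/4) * l1 ν q.2))) :=
    hprod4.mul_left _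
  have hkey : ∀ q : (Fin ν → ℤ) × (Fin ν → ℤ),
      K * (Real.exp (-α * l1 ν (n + q.1 - q.2)) *
        (Real.exp (-ρ * l1 ν q.1) * Real.exp (-ρ * l1 ν q.2))) ≤
      (K * Real.exp (-α * l1 ν n)) *
        (Real.exp (-(ρ/4) * l1 ν q.1) * Real.exp (-(ρ/4) * l1 ν q.2)) := by
    intro q
    have htri : l1 ν n ≤ l1 ν (n + q.1 - q.2) + l1 ν q.1 + l1 ν q.2 :=
      dNLS_l1_triple (by funext j; simp only [Pi.add_apply, Pi.sub_apply]; ring)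
    have hb := dNLS_expkey hα0 hαρ (dNLS_l1_nonneg ν (n + q.1 - q.2)) (dNLS_l1_nonneg ν q.1)
      (dNLS_l1_nonneg ν q.2) htri
    calc K * (Real.exp (-α * l1 ν (n + q.1 - q.2)) *
          (Real.exp (-ρ * l1 ν q.1) * Real.exp (-ρ * l1 ν q.2)))
        ≤ K * (Real.exp (-α * l1 ν n) *
          (Real.exp (-(ρ/4) * l1 ν q.1) * Real.exp (-(ρ/4) * l1 ν q.2))) :=
          mul_le_mul_of_nonneg_left hb hK
      _ = (K * Real.exp (-α * l1 ν n)) *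
          (Real.exp (-(ρ/4) * l1 ν q.1) * Real.exp (-(ρ/4) * l1 ν q.2)) := by ring
  have hFcomp : Summable (fun q : (Fin ν → ℤ) × (Fin ν → ℤ) =>
      K * (Real.exp (-α * l1 ν (n + q.1 - q.2)) *
        (Real.exp (-ρ * l1 ν q.1) * Real.exp (-ρ * l1 ν q.2)))) :=
    Summable.of_nonneg_of_le (fun q => by positivity) hkey hG
  constructor
  · exact ((dNLS_e1 ν n).summable_iff).1 (hFcomp.congr fun q => rfl)
  · rw [← Equiv.tsum_eq (dNLS_e1 ν n) (fun p : Triple ν n =>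
      K * (Real.exp (-α * l1 ν p.val.1) *
        (Real.exp (-ρ * l1 ν p.val.2.1) * Real.exp (-ρ * l1 ν p.val.2.2))))]
    calc ∑' q : (Fin ν → ℤ) × (Fin ν → ℤ),
          K * (Real.exp (-α * l1 ν (n + q.1 - q.2)) *
            (Real.exp (-ρ * l1 ν q.1) * Real.exp (-ρ * l1 ν q.2)))
        ≤ ∑' q : (Fin ν → ℤ) × (Fin ν → ℤ),
          (K * Real.exp (-α * l1 ν n)) *
            (Real.exp (-(ρ/4) * l1 ν q.1) * Real.exp (-(ρ/4) * l1 ν q.2)) :=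
          Summable.tsum_le_tsum hkey hFcomp hG
      _ = (K * Real.exp (-α * l1 ν n)) *
          ((∑' m, Real.exp (-(ρ/4) * l1 ν m)) * (∑' m, Real.exp (-(ρ/4) * l1 ν m))) := by
          rw [tsum_mul_left, dNLS_tsumProd hpi hpi hprod4]
      _ = K * Real.exp (-α * l1 ν n) * (∑' m : Fin ν → ℤ, Real.exp (-(ρ/4) * l1 ν m))^2 := by
          ring

/-- Summability and bound over triples: α-decay on slot 2. -/
lemma dNLS_tri2 (hρ : 0 < ρ) (hα0 : 0 ≤ α) (hαρ : α + ρ/4 ≤ ρ)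
    (hK : 0 ≤ K) (n : Fin ν → ℤ) :
    Summable (fun p : Triple ν n =>
      K * (Real.exp (-ρ * l1 ν p.val.1) *
        (Real.exp (-α * l1 ν p.val.2.1) * Real.exp (-ρ * l1 ν p.val.2.2)))) ∧
    ∑' p : Triple ν n, K * (Real.exp (-ρ * l1 ν p.val.1) *
        (Real.exp (-α * l1 ν p.val.2.1) * Real.exp (-ρ * l1 ν p.val.2.2))) ≤
      K * Real.exp (-α * l1 ν n) * (∑' m : Fin ν → ℤ, Real.exp (-(ρ/4) * l1 ν m))^2 := by
  have hσ : (0:ℝ) < ρ/4 := by linarith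
  have hpi := dNLS_sumPi ν hσ
  have hprod4 : Summable (fun q : (Fin ν → ℤ) × (Fin ν → ℤ) =>
      Real.exp (-(ρ/4) * l1 ν q.1) * Real.exp (-(ρ/4) * l1 ν q.2)) :=
    hpi.mul_of_nonneg hpi (fun _ => Real.exp_nonneg _) (fun _ => Real.exp_nonneg _)
  have hG : Summable (fun q : (Fin ν → ℤ) × (Fin ν → ℤ) =>
      (K * Real.exp (-α * l1 ν n)) *
        (Real.exp (-(ρ/4) * l1 ν q.1) * Real.exp (-(ρ/4) * l1 ν q.2))) :=
    hprod4.mul_left _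
  have hkey : ∀ q : (Fin ν → ℤ) × (Fin ν → ℤ),
      K * (Real.exp (-ρ * l1 ν q.1) *
        (Real.exp (-α * l1 ν (q.1 + q.2 - n)) * Real.exp (-ρ * l1 ν q.2))) ≤
      (K * Real.exp (-α * l1 ν n)) *
        (Real.exp (-(ρ/4) * l1 ν q.1) * Real.exp (-(ρ/4) * l1 ν q.2)) := by
    intro q
    have htri : l1 ν n ≤ l1 ν (q.1 + q.2 - n) + l1 ν q.1 + l1 ν q.2 := by
      have h := dNLS_l1_triple (n := n) (p1 := q.1) (p2 := q.1 + q.2 - n) (p3 := q.2)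
        (by funext j; simp only [Pi.add_apply, Pi.sub_apply]; ring)
      linarith
    have hb := dNLS_expkey hα0 hαρ (dNLS_l1_nonneg ν (q.1 + q.2 - n)) (dNLS_l1_nonneg ν q.1)
      (dNLS_l1_nonneg ν q.2) htri
    calc K * (Real.exp (-ρ * l1 ν q.1) *
          (Real.exp (-α * l1 ν (q.1 + q.2 - n)) * Real.exp (-ρ * l1 ν q.2)))
        = K * (Real.exp (-α * l1 ν (q.1 + q.2 - n)) *
          (Real.exp (-ρ * l1 ν q.1) * Real.exp (-ρ * l1 ν q.2))) := by ring
      _ ≤ K * (Real.exp (-α * l1 ν n) *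
          (Real.exp (-(ρ/4) * l1 ν q.1) * Real.exp (-(ρ/4) * l1 ν q.2))) :=
          mul_le_mul_of_nonneg_left hb hK
      _ = (K * Real.exp (-α * l1 ν n)) *
          (Real.exp (-(ρ/4) * l1 ν q.1) * Real.exp (-(ρ/4) * l1 ν q.2)) := by ring
  have hFcomp : Summable (fun q : (Fin ν → ℤ) × (Fin ν → ℤ) =>
      K * (Real.exp (-ρ * l1 ν q.1) *
        (Real.exp (-α * l1 ν (q.1 + q.2 - n)) * Real.exp (-ρ * l1 ν q.2)))) :=
    Summable.of_nonneg_of_le (fun q => by positivity) hkey hG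
  constructor
  · exact ((dNLS_e2 ν n).summable_iff).1 (hFcomp.congr fun q => rfl)
  · rw [← Equiv.tsum_eq (dNLS_e2 ν n) (fun p : Triple ν n =>
      K * (Real.exp (-ρ * l1 ν p.val.1) *
        (Real.exp (-α * l1 ν p.val.2.1) * Real.exp (-ρ * l1 ν p.val.2.2))))]
    calc ∑' q : (Fin ν → ℤ) × (Fin ν → ℤ),
          K * (Real.exp (-ρ * l1 ν q.1) *
            (Real.exp (-α * l1 ν (q.1 + q.2 - n)) * Real.exp (-ρ * l1 ν q.2)))
        ≤ ∑' q : (Fin ν → ℤ) × (Fin ν → ℤ),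
          (K * Real.exp (-α * l1 ν n)) *
            (Real.exp (-(ρ/4) * l1 ν q.1) * Real.exp (-(ρ/4) * l1 ν q.2)) :=
          Summable.tsum_le_tsum hkey hFcomp hG
      _ = (K * Real.exp (-α * l1 ν n)) *
          ((∑' m, Real.exp (-(ρ/4) * l1 ν m)) * (∑' m, Real.exp (-(ρ/4) * l1 ν m))) := by
          rw [tsum_mul_left, dNLS_tsumProd hpi hpi hprod4]
      _ = K * Real.exp (-α * l1 ν n) * (∑' m : Fin ν → ℤ, Real.exp (-(ρ/4) * l1 ν m))^2 := by
          ring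

/-- Summability and bound over triples: α-decay on slot 3. -/
lemma dNLS_tri3 (hρ : 0 < ρ) (hα0 : 0 ≤ α) (hαρ : α + ρ/4 ≤ ρ)
    (hK : 0 ≤ K) (n : Fin ν → ℤ) :
    Summable (fun p : Triple ν n =>
      K * (Real.exp (-ρ * l1 ν p.val.1) *
        (Real.exp (-ρ * l1 ν p.val.2.1) * Real.exp (-α * l1 ν p.val.2.2)))) ∧
    ∑' p : Triple ν n, K * (Real.exp (-ρ * l1 ν p.val.1) *
        (Real.exp (-ρ * l1 ν p.val.2.1) * Real.exp (-α * l1 ν p.val.2.2))) ≤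
      K * Real.exp (-α * l1 ν n) * (∑' m : Fin ν → ℤ, Real.exp (-(ρ/4) * l1 ν m))^2 := by
  have hσ : (0:ℝ) < ρ/4 := by linarith
  have hpi := dNLS_sumPi ν hσ
  have hprod4 : Summable (fun q : (Fin ν → ℤ) × (Fin ν → ℤ) =>
      Real.exp (-(ρ/4) * l1 ν q.1) * Real.exp (-(ρ/4) * l1 ν q.2)) :=
    hpi.mul_of_nonneg hpi (fun _ => Real.exp_nonneg _) (fun _ => Real.exp_nonneg _)
  have hG : Summable (fun q : (Fin ν → ℤ) × (Fin ν → ℤ) =>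
      (K * Real.exp (-α * l1 ν n)) *
        (Real.exp (-(ρ/4) * l1 ν q.1) * Real.exp (-(ρ/4) * l1 ν q.2))) :=
    hprod4.mul_left _
  have hkey : ∀ q : (Fin ν → ℤ) × (Fin ν → ℤ),
      K * (Real.exp (-ρ * l1 ν q.1) *
        (Real.exp (-ρ * l1 ν q.2) * Real.exp (-α * l1 ν (n - q.1 + q.2)))) ≤
      (K * Real.exp (-α * l1 ν n)) *
        (Real.exp (-(ρ/4) * l1 ν q.1) * Real.exp (-(ρ/4) * l1 ν q.2)) := by
    intro q
    have htri : l1 ν n ≤ l1 ν (n - q.1 + q.2) + l1 ν q.1 + l1 ν q.2 := by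
      have h := dNLS_l1_triple (n := n) (p1 := q.1) (p2 := q.2) (p3 := n - q.1 + q.2)
        (by funext j; simp only [Pi.add_apply, Pi.sub_apply]; ring)
      linarith
    have hb := dNLS_expkey hα0 hαρ (dNLS_l1_nonneg ν (n - q.1 + q.2)) (dNLS_l1_nonneg ν q.1)
      (dNLS_l1_nonneg ν q.2) htri
    calc K * (Real.exp (-ρ * l1 ν q.1) *
          (Real.exp (-ρ * l1 ν q.2) * Real.exp (-α * l1 ν (n - q.1 + q.2))))
        = K * (Real.exp (-α * l1 ν (n - q.1 + q.2)) *
          (Real.exp (-ρ * l1 ν q.1) * Real.exp (-ρ * l1 ν q.2))) := by ring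
      _ ≤ K * (Real.exp (-α * l1 ν n) *
          (Real.exp (-(ρ/4) * l1 ν q.1) * Real.exp (-(ρ/4) * l1 ν q.2))) :=
          mul_le_mul_of_nonneg_left hb hK
      _ = (K * Real.exp (-α * l1 ν n)) *
          (Real.exp (-(ρ/4) * l1 ν q.1) * Real.exp (-(ρ/4) * l1 ν q.2)) := by ring
  have hFcomp : Summable (fun q : (Fin ν → ℤ) × (Fin ν → ℤ) =>
      K * (Real.exp (-ρ * l1 ν q.1) *
        (Real.exp (-ρ * l1 ν q.2) * Real.exp (-α * l1 ν (n - q.1 + q.2))))) :=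
    Summable.of_nonneg_of_le (fun q => by positivity) hkey hG
  constructor
  · exact ((dNLS_e3 ν n).summable_iff).1 (hFcomp.congr fun q => rfl)
  · rw [← Equiv.tsum_eq (dNLS_e3 ν n) (fun p : Triple ν n =>
      K * (Real.exp (-ρ * l1 ν p.val.1) *
        (Real.exp (-ρ * l1 ν p.val.2.1) * Real.exp (-α * l1 ν p.val.2.2))))]
    calc ∑' q : (Fin ν → ℤ) × (Fin ν → ℤ),
          K * (Real.exp (-ρ * l1 ν q.1) *
            (Real.exp (-ρ * l1 ν q.2) * Real.exp (-α * l1 ν (n - q.1 + q.2))))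
        ≤ ∑' q : (Fin ν → ℤ) × (Fin ν → ℤ),
          (K * Real.exp (-α * l1 ν n)) *
            (Real.exp (-(ρ/4) * l1 ν q.1) * Real.exp (-(ρ/4) * l1 ν q.2)) :=
          Summable.tsum_le_tsum hkey hFcomp hG
      _ = (K * Real.exp (-α * l1 ν n)) *
          ((∑' m, Real.exp (-(ρ/4) * l1 ν m)) * (∑' m, Real.exp (-(ρ/4) * l1 ν m))) := by
          rw [tsum_mul_left, dNLS_tsumProd hpi hpi hprod4]
      _ = K * Real.exp (-α * l1 ν n) * (∑' m : Fin ν → ℤ, Real.exp (-(ρ/4) * l1 ν m))^2 := by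
          ring

end triSlots

/-- Summability of the cubic series, and a constant bound on `NLterm`. -/
lemma dNLS_NLsummable (ν : ℕ) {ρ C₁ : ℝ} (hρ : 0 < ρ) (hC : 0 ≤ C₁)
    {cc : (Fin ν → ℤ) → ℂ}
    (hc : ∀ m, ‖cc m‖ ≤ C₁ * Real.exp (-ρ * l1 ν m)) (n : Fin ν → ℤ) :
    Summable (fun p : Triple ν n => cc p.val.1 * (starRingEnd ℂ) (cc p.val.2.1) * cc p.val.2.2) ∧
    ‖NLterm ν cc n‖ ≤
      C₁^3 * (∑' m : Fin ν → ℤ, Real.exp (-(ρ/4) * l1 ν m))^2 := by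
  have htri0 := dNLS_tri0 ν hρ (show (0:ℝ) ≤ C₁^3 by positivity) n
  have hbd : ∀ p : Triple ν n,
      ‖cc p.val.1 * (starRingEnd ℂ) (cc p.val.2.1) * cc p.val.2.2‖ ≤
      C₁^3 * (Real.exp (-ρ * l1 ν p.val.2.1) * Real.exp (-ρ * l1 ν p.val.2.2)) := by
    intro p
    rw [norm_mul, norm_mul]
    have h1 : ‖cc p.val.1‖ ≤ C₁ := by
      have hb := hc p.val.1
      refine hb.trans ?_
      nlinarith [Real.exp_le_one_iff.2 (show -ρ * l1 ν p.val.1 ≤ 0 by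
        nlinarith [dNLS_l1_nonneg ν p.val.1]), Real.exp_nonneg (-ρ * l1 ν p.val.1)]
    have h2 : ‖(starRingEnd ℂ) (cc p.val.2.1)‖ ≤ C₁ * Real.exp (-ρ * l1 ν p.val.2.1) := by
      rw [RCLike.norm_conj]
      exact hc p.val.2.1
    have h3 : ‖cc p.val.2.2‖ ≤ C₁ * Real.exp (-ρ * l1 ν p.val.2.2) := by
      exact hc p.val.2.2
    calc ‖cc p.val.1‖ * ‖(starRingEnd ℂ) (cc p.val.2.1)‖ * ‖cc p.val.2.2‖
        ≤ C₁ * (C₁ * Real.exp (-ρ * l1 ν p.val.2.1)) * (C₁ * Real.exp (-ρ * l1 ν p.val.2.2)) := by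
          refine mul_le_mul (mul_le_mul h1 h2 (norm_nonneg _) hC) h3 (norm_nonneg _) ?_
          positivity
      _ = C₁^3 * (Real.exp (-ρ * l1 ν p.val.2.1) * Real.exp (-ρ * l1 ν p.val.2.2)) := by ring
  have hnorms : Summable (fun p : Triple ν n =>
      ‖cc p.val.1 * (starRingEnd ℂ) (cc p.val.2.1) * cc p.val.2.2‖) :=
    Summable.of_nonneg_of_le (fun p => norm_nonneg _) hbd htri0.1
  have hsum : Summable (fun p : Triple ν n =>
      cc p.val.1 * (starRingEnd ℂ) (cc p.val.2.1) * cc p.val.2.2) :=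
    hnorms.of_norm
  refine ⟨hsum, ?_⟩
  unfold NLterm
  calc ‖∑' p : Triple ν n, cc p.val.1 * (starRingEnd ℂ) (cc p.val.2.1) * cc p.val.2.2‖
      ≤ ∑' p : Triple ν n, ‖cc p.val.1 * (starRingEnd ℂ) (cc p.val.2.1) * cc p.val.2.2‖ :=
        norm_tsum_le_tsum_norm hnorms
    _ ≤ ∑' p : Triple ν n,
        C₁^3 * (Real.exp (-ρ * l1 ν p.val.2.1) * Real.exp (-ρ * l1 ν p.val.2.2)) :=
        Summable.tsum_le_tsum hbd hnorms htri0.1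
    _ ≤ C₁^3 * (∑' m : Fin ν → ℤ, Real.exp (-(ρ/4) * l1 ν m))^2 := htri0.2

/-- The main nonlinear difference estimate. -/
lemma dNLS_NLdiff (ν : ℕ) {ρ C₁ α D : ℝ} (hρ : 0 < ρ) (hC : 0 ≤ C₁)
    (hα0 : 0 ≤ α) (hαρ : α + ρ/4 ≤ ρ) (hD : 0 ≤ D)
    {cc dd : (Fin ν → ℤ) → ℂ}
    (hc : ∀ m, ‖cc m‖ ≤ C₁ * Real.exp (-ρ * l1 ν m))
    (hd : ∀ m, ‖dd m‖ ≤ C₁ * Real.exp (-ρ * l1 ν m))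
    (hδ : ∀ m, ‖cc m - dd m‖ ≤ D * Real.exp (-α * l1 ν m))
    (n : Fin ν → ℤ) :
    ‖NLterm ν cc n - NLterm ν dd n‖ ≤
      3 * C₁^2 * D * (∑' m : Fin ν → ℤ, Real.exp (-(ρ/4) * l1 ν m))^2 *
        Real.exp (-α * l1 ν n) := by
  set Q := ∑' m : Fin ν → ℤ, Real.exp (-(ρ/4) * l1 ν m) with hQdef
  have hX := dNLS_NLsummable ν hρ hC hc n
  have hY := dNLS_NLsummable ν hρ hC hd n
  set X : Triple ν n → ℂ :=
    fun p => cc p.val.1 * (starRingEnd ℂ) (cc p.val.2.1) * cc p.val.2.2 with hXdef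
  set Y : Triple ν n → ℂ :=
    fun p => dd p.val.1 * (starRingEnd ℂ) (dd p.val.2.1) * dd p.val.2.2 with hYdef
  have htri1 := dNLS_tri1 ν hρ hα0 hαρ (show (0:ℝ) ≤ D * C₁^2 by positivity) n
  have htri2 := dNLS_tri2 ν hρ hα0 hαρ (show (0:ℝ) ≤ D * C₁^2 by positivity) n
  have htri3 := dNLS_tri3 ν hρ hα0 hαρ (show (0:ℝ) ≤ D * C₁^2 by positivity) n
  set T1 : Triple ν n → ℝ := fun p => (D * C₁^2) * (Real.exp (-α * l1 ν p.val.1) *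
      (Real.exp (-ρ * l1 ν p.val.2.1) * Real.exp (-ρ * l1 ν p.val.2.2))) with hT1def
  set T2 : Triple ν n → ℝ := fun p => (D * C₁^2) * (Real.exp (-ρ * l1 ν p.val.1) *
      (Real.exp (-α * l1 ν p.val.2.1) * Real.exp (-ρ * l1 ν p.val.2.2))) with hT2def
  set T3 : Triple ν n → ℝ := fun p => (D * C₁^2) * (Real.exp (-ρ * l1 ν p.val.1) *
      (Real.exp (-ρ * l1 ν p.val.2.1) * Real.exp (-α * l1 ν p.val.2.2))) with hT3def
  have hptwise : ∀ p : Triple ν n, ‖X p - Y p‖ ≤ T1 p + T2 p + T3 p := by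
    intro p
    obtain ⟨⟨p1, p2, p3⟩, hp⟩ := p
    have hsplit : X ⟨(p1, p2, p3), hp⟩ - Y ⟨(p1, p2, p3), hp⟩ =
        (cc p1 - dd p1) * (starRingEnd ℂ) (cc p2) * cc p3 +
        dd p1 * (starRingEnd ℂ) (cc p2 - dd p2) * cc p3 +
        dd p1 * (starRingEnd ℂ) (dd p2) * (cc p3 - dd p3) := by
      simp only [hXdef, hYdef, map_sub]
      ring
    rw [hsplit]
    have habs : ∀ z : ℂ, ‖(starRingEnd ℂ) z‖ = ‖z‖ := fun z => RCLike.norm_conj z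
    have e1 : ‖(cc p1 - dd p1) * (starRingEnd ℂ) (cc p2) * cc p3‖ ≤
        (D * Real.exp (-α * l1 ν p1)) * ((C₁ * Real.exp (-ρ * l1 ν p2)) *
          (C₁ * Real.exp (-ρ * l1 ν p3))) := by
      rw [norm_mul, norm_mul, habs]
      have b1 := hδ p1; have b2 := hc p2; have b3 := hc p3
      calc ‖cc p1 - dd p1‖ * ‖cc p2‖ * ‖cc p3‖
          ≤ (D * Real.exp (-α * l1 ν p1)) * (C₁ * Real.exp (-ρ * l1 ν p2)) *
              (C₁ * Real.exp (-ρ * l1 ν p3)) := by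
            refine mul_le_mul (mul_le_mul b1 b2 (norm_nonneg _) (by positivity)) b3
              (norm_nonneg _) (by positivity)
        _ = (D * Real.exp (-α * l1 ν p1)) * ((C₁ * Real.exp (-ρ * l1 ν p2)) *
              (C₁ * Real.exp (-ρ * l1 ν p3))) := by ring
    have e2 : ‖dd p1 * (starRingEnd ℂ) (cc p2 - dd p2) * cc p3‖ ≤
        (C₁ * Real.exp (-ρ * l1 ν p1)) * ((D * Real.exp (-α * l1 ν p2)) *
          (C₁ * Real.exp (-ρ * l1 ν p3))) := by
      rw [norm_mul, norm_mul, habs]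
      have b1 := hd p1; have b2 := hδ p2; have b3 := hc p3
      calc ‖dd p1‖ * ‖cc p2 - dd p2‖ * ‖cc p3‖
          ≤ (C₁ * Real.exp (-ρ * l1 ν p1)) * (D * Real.exp (-α * l1 ν p2)) *
              (C₁ * Real.exp (-ρ * l1 ν p3)) := by
            refine mul_le_mul (mul_le_mul b1 b2 (norm_nonneg _) (by positivity)) b3
              (norm_nonneg _) (by positivity)
        _ = (C₁ * Real.exp (-ρ * l1 ν p1)) * ((D * Real.exp (-α * l1 ν p2)) *
              (C₁ * Real.exp (-ρ * l1 ν p3))) := by ring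
    have e3 : ‖dd p1 * (starRingEnd ℂ) (dd p2) * (cc p3 - dd p3)‖ ≤
        (C₁ * Real.exp (-ρ * l1 ν p1)) * ((C₁ * Real.exp (-ρ * l1 ν p2)) *
          (D * Real.exp (-α * l1 ν p3))) := by
      rw [norm_mul, norm_mul, habs]
      have b1 := hd p1; have b2 := hd p2; have b3 := hδ p3
      calc ‖dd p1‖ * ‖dd p2‖ * ‖cc p3 - dd p3‖
          ≤ (C₁ * Real.exp (-ρ * l1 ν p1)) * (C₁ * Real.exp (-ρ * l1 ν p2)) *
              (D * Real.exp (-α * l1 ν p3)) := by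
            refine mul_le_mul (mul_le_mul b1 b2 (norm_nonneg _) (by positivity)) b3
              (norm_nonneg _) (by positivity)
        _ = (C₁ * Real.exp (-ρ * l1 ν p1)) * ((C₁ * Real.exp (-ρ * l1 ν p2)) *
              (D * Real.exp (-α * l1 ν p3))) := by ring
    calc ‖(cc p1 - dd p1) * (starRingEnd ℂ) (cc p2) * cc p3 +
          dd p1 * (starRingEnd ℂ) (cc p2 - dd p2) * cc p3 +
          dd p1 * (starRingEnd ℂ) (dd p2) * (cc p3 - dd p3)‖
        ≤ ‖(cc p1 - dd p1) * (starRingEnd ℂ) (cc p2) * cc p3 +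
            dd p1 * (starRingEnd ℂ) (cc p2 - dd p2) * cc p3‖ +
          ‖dd p1 * (starRingEnd ℂ) (dd p2) * (cc p3 - dd p3)‖ := norm_add_le _ _
      _ ≤ ‖(cc p1 - dd p1) * (starRingEnd ℂ) (cc p2) * cc p3‖ +
          ‖dd p1 * (starRingEnd ℂ) (cc p2 - dd p2) * cc p3‖ +
          ‖dd p1 * (starRingEnd ℂ) (dd p2) * (cc p3 - dd p3)‖ := by
            have := norm_add_le ((cc p1 - dd p1) * (starRingEnd ℂ) (cc p2) * cc p3)
              (dd p1 * (starRingEnd ℂ) (cc p2 - dd p2) * cc p3)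
            linarith
      _ ≤ T1 ⟨(p1, p2, p3), hp⟩ + T2 ⟨(p1, p2, p3), hp⟩ + T3 ⟨(p1, p2, p3), hp⟩ := by
            simp only [hT1def, hT2def, hT3def]
            have r1 : (D * Real.exp (-α * l1 ν p1)) * ((C₁ * Real.exp (-ρ * l1 ν p2)) *
                (C₁ * Real.exp (-ρ * l1 ν p3))) = (D * C₁^2) * (Real.exp (-α * l1 ν p1) *
                (Real.exp (-ρ * l1 ν p2) * Real.exp (-ρ * l1 ν p3))) := by ring
            have r2 : (C₁ * Real.exp (-ρ * l1 ν p1)) * ((D * Real.exp (-α * l1 ν p2)) *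
                (C₁ * Real.exp (-ρ * l1 ν p3))) = (D * C₁^2) * (Real.exp (-ρ * l1 ν p1) *
                (Real.exp (-α * l1 ν p2) * Real.exp (-ρ * l1 ν p3))) := by ring
            have r3 : (C₁ * Real.exp (-ρ * l1 ν p1)) * ((C₁ * Real.exp (-ρ * l1 ν p2)) *
                (D * Real.exp (-α * l1 ν p3))) = (D * C₁^2) * (Real.exp (-ρ * l1 ν p1) *
                (Real.exp (-ρ * l1 ν p2) * Real.exp (-α * l1 ν p3))) := by ring
            rw [← r1, ← r2, ← r3]
            linarith
  have hTsum : Summable (fun p => T1 p + T2 p + T3 p) := (htri1.1.add htri2.1).add htri3.1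
  have hXYnorm : Summable (fun p : Triple ν n => ‖X p - Y p‖) :=
    Summable.of_nonneg_of_le (fun p => norm_nonneg _) hptwise hTsum
  have hdiff : NLterm ν cc n - NLterm ν dd n = ∑' p : Triple ν n, (X p - Y p) := by
    unfold NLterm
    rw [Summable.tsum_sub hX.1 hY.1]
  rw [hdiff]
  calc ‖∑' p : Triple ν n, (X p - Y p)‖
      ≤ ∑' p : Triple ν n, ‖X p - Y p‖ := norm_tsum_le_tsum_norm hXYnorm
    _ ≤ ∑' p : Triple ν n, (T1 p + T2 p + T3 p) := Summable.tsum_le_tsum hptwise hXYnorm hTsum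
    _ = (∑' p, T1 p + ∑' p, T2 p) + ∑' p : Triple ν n, T3 p := by
        rw [Summable.tsum_add (htri1.1.add htri2.1) htri3.1, Summable.tsum_add htri1.1 htri2.1]
    _ ≤ ((D * C₁^2) * Real.exp (-α * l1 ν n) * Q^2 +
        (D * C₁^2) * Real.exp (-α * l1 ν n) * Q^2) +
        (D * C₁^2) * Real.exp (-α * l1 ν n) * Q^2 := by
        have := htri1.2; have := htri2.2; have := htri3.2
        refine add_le_add (add_le_add htri1.2 htri2.2) htri3.2
    _ = 3 * C₁^2 * D * Q^2 * Real.exp (-α * l1 ν n) := by ring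

/-- Measurability of a primitive of an arbitrary function. -/
lemma dNLS_measPrim (h : ℝ → ℂ) (b : ℝ) :
    AEMeasurable (fun u => ∫ x in (0:ℝ)..u, h x) (volume.restrict (Set.Ioc 0 b)) := by
  set H : ℝ → ℂ := fun u => ∫ x in (0:ℝ)..u, h x with hHdef
  set A : Set ℝ := {u : ℝ | 0 ≤ u ∧ IntervalIntegrable h volume 0 u} with hAdef
  have hAord : A.OrdConnected := by
    constructor
    rintro x ⟨hx0, _⟩ y ⟨hy0, hyi⟩ z hz
    refine ⟨hx0.trans hz.1, hyi.mono_set ?_⟩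
    rw [Set.uIcc_of_le (hx0.trans hz.1), Set.uIcc_of_le hy0]
    exact Set.Icc_subset_Icc le_rfl hz.2
  have hAmeas : MeasurableSet A := hAord.measurableSet
  have hIcc : ∀ u1 ∈ A, ContinuousOn H (Set.Icc 0 u1) := by
    intro u1 hu1
    have hint : IntegrableOn h (Set.uIcc 0 u1) volume := by
      have h2 := hu1.2
      rw [intervalIntegrable_iff_integrableOn_Ioc_of_le hu1.1] at h2
      rw [Set.uIcc_of_le hu1.1]
      exact h2.congr_set_ae Ioc_ae_eq_Icc.symm
    have := intervalIntegral.continuousOn_primitive_interval hint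
    rwa [Set.uIcc_of_le hu1.1] at this
  have hcont : ContinuousOn H A := by
    intro u0 hu0
    by_cases hmax : ∃ u1 ∈ A, u0 < u1
    · obtain ⟨u1, hu1, hlt⟩ := hmax
      have hc1 : ContinuousWithinAt H (Set.Icc 0 u1) u0 :=
        hIcc u1 hu1 u0 ⟨hu0.1, hlt.le⟩
      have hsub : A ∩ Set.Iio u1 ⊆ Set.Icc 0 u1 := fun z hz => ⟨hz.1.1, le_of_lt hz.2⟩
      have hmem : A ∩ Set.Iio u1 ∈ 𝓝[A] u0 :=
        inter_mem_nhdsWithin A (Iio_mem_nhds hlt)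
      exact (hc1.mono hsub).mono_of_mem_nhdsWithin hmem
    · push_neg at hmax
      have hsub : A ⊆ Set.Icc 0 u0 := fun z hz => ⟨hz.1, hmax z hz⟩
      exact ((hIcc u0 hu0).mono hsub) u0 hu0
  have hmeasA : AEMeasurable H (volume.restrict A) := hcont.aemeasurable hAmeas
  have hind : AEMeasurable (A.indicator H) volume := (aemeasurable_indicator_iff hAmeas).2 hmeasA
  refine AEMeasurable.congr (hind.restrict) ?_
  refine (ae_restrict_iff' measurableSet_Ioc).2 (ae_of_all _ fun u hu => ?_)
  by_cases hmem : u ∈ A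
  · simp [Set.indicator_of_mem hmem]
  · have hni : ¬ IntervalIntegrable h volume 0 u := fun hint => hmem ⟨hu.1.le, hint⟩
    simp [Set.indicator_of_notMem hmem, hHdef, intervalIntegral.integral_undef hni]

lemma dNLS_absExpI (a b : ℝ) :
    ‖Complex.exp (-Complex.I * (a : ℂ)^2 * (b : ℂ))‖ = 1 := by
  rw [Complex.norm_exp]
  have : -Complex.I * (a : ℂ)^2 * (b : ℂ) = ((-(a^2*b) : ℝ) : ℂ) * Complex.I := by
    rw [Complex.ofReal_neg, Complex.ofReal_mul, Complex.ofReal_pow]; ring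
  rw [this]
  have h0 : ∀ r : ℝ, ((r : ℂ) * Complex.I).re = 0 := fun r => by
    rw [Complex.mul_I_re]
    simp
  rw [h0, Real.exp_zero]

lemma dNLS_intexp {b s : ℝ} (hb : 0 < b) :
    ∫ u in (0:ℝ)..s, Real.exp (b*u) = (Real.exp (b*s) - 1)/b := by
  have : ∀ u ∈ Set.uIcc (0:ℝ) s, HasDerivAt (fun x => Real.exp (b*x)/b) (Real.exp (b*u)) u := by
    intro u _
    have h1 : HasDerivAt (fun x : ℝ => b*x) b u := by
      simpa using (hasDerivAt_id u).const_mul b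
    have h2 : HasDerivAt (fun x : ℝ => Real.exp (b*x)) (Real.exp (b*u) * b) u :=
      (Real.hasDerivAt_exp (b*u)).comp u h1
    have h3 := h2.div_const b
    simpa [mul_div_assoc, mul_div_cancel_right₀ _ (ne_of_gt hb)] using h3
  rw [intervalIntegral.integral_eq_sub_of_hasDerivAt this ?_]
  · simp [mul_zero, Real.exp_zero, sub_div]
  · exact (Real.continuous_exp.comp (continuous_const.mul continuous_id)).intervalIntegrable 0 s

/-- Measurability of `u ↦ c u m` and `u ↦ NLterm ν (c u) n`. -/
lemma dNLS_meas (ν : ℕ) (hν : 1 ≤ ν) (ω : Fin ν → ℝ) {T t ρ C₁ : ℝ}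
    (htT : t < T) (ht : 0 < t) (hρ : 0 < ρ) (hC : 0 ≤ C₁)
    (c : ℝ → (Fin ν → ℤ) → ℂ)
    (hcb : ∀ s, 0 ≤ s → s < T → ∀ n : Fin ν → ℤ,
      ‖c s n‖ ≤ C₁ * Real.exp (-ρ * l1 ν n))
    (hci : ∀ s, 0 ≤ s → s < T → ∀ n : Fin ν → ℤ, c s n =
      Complex.exp (-Complex.I * ((frq ν ω n : ℝ) : ℂ) ^ 2 * (s : ℂ)) * c 0 n +
        Complex.I * ((frq ν ω n : ℝ) : ℂ) *
          ∫ x in (0 : ℝ)..s,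
            Complex.exp (-Complex.I * ((frq ν ω n : ℝ) : ℂ) ^ 2 * ((s : ℂ) - (x : ℂ))) *
              NLterm ν (c x) n) :
    ∀ n : Fin ν → ℤ, AEMeasurable (fun u => NLterm ν (c u) n) (volume.restrict (Set.Ioc 0 t)) := by
  have hcm : ∀ m : Fin ν → ℤ, AEMeasurable (fun u => c u m) (volume.restrict (Set.Ioc 0 t)) := by
    intro m
    set φ : ℝ := frq ν ω m with hφdef
    set h : ℝ → ℂ := fun x => Complex.exp (Complex.I * (φ:ℂ)^2 * (x:ℂ)) * NLterm ν (c x) m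
      with hhdef
    have hrep : ∀ u ∈ Set.Ioc (0:ℝ) t, c u m =
        Complex.exp (-Complex.I * (φ:ℂ)^2 * (u:ℂ)) * c 0 m +
        Complex.I * (φ:ℂ) * Complex.exp (-Complex.I * (φ:ℂ)^2 * (u:ℂ)) *
          ∫ x in (0:ℝ)..u, h x := by
      intro u hu
      rw [hci u hu.1.le (lt_of_le_of_lt hu.2 htT) m]
      congr 1
      have heq : (fun x : ℝ => Complex.exp (-Complex.I * (φ:ℂ)^2 * ((u:ℂ) - (x:ℂ))) *
          NLterm ν (c x) m) = fun x : ℝ =>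
          Complex.exp (-Complex.I * (φ:ℂ)^2 * (u:ℂ)) * h x := by
        funext x
        rw [hhdef]
        simp only
        rw [← mul_assoc, ← Complex.exp_add]
        congr 2
        ring
      rw [heq, intervalIntegral.integral_const_mul]
      ring
    have hprim : AEMeasurable (fun u => ∫ x in (0:ℝ)..u, h x)
        (volume.restrict (Set.Ioc 0 t)) := dNLS_measPrim h t
    have hcont1 : Continuous (fun u : ℝ => Complex.exp (-Complex.I * (φ:ℂ)^2 * (u:ℂ))) := by
      refine Complex.continuous_exp.comp ?_
      exact (continuous_const.mul Complex.continuous_ofReal)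
    have : AEMeasurable (fun u : ℝ =>
        Complex.exp (-Complex.I * (φ:ℂ)^2 * (u:ℂ)) * c 0 m +
        Complex.I * (φ:ℂ) * Complex.exp (-Complex.I * (φ:ℂ)^2 * (u:ℂ)) *
          ∫ x in (0:ℝ)..u, h x) (volume.restrict (Set.Ioc 0 t)) := by
      refine AEMeasurable.add ?_ ?_
      · exact hcont1.aemeasurable.mul_const _
      · exact (hcont1.aemeasurable.const_mul _).mul hprim
    refine this.congr ?_
    refine (ae_restrict_iff' measurableSet_Ioc).2 (ae_of_all _ fun u hu => ?_)
    exact (hrep u hu).symm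
  intro n
  -- ℕ-indexed exhaustion of the triples
  have hinf : Infinite (Triple ν n) := by
    have hne : Nonempty (Fin ν) := ⟨⟨0, hν⟩⟩
    have : Infinite (Fin ν → ℤ) := by
      refine Infinite.of_injective (fun z : ℤ => (fun _ => z : Fin ν → ℤ)) ?_
      intro a b hab
      have := congrFun hab hne.some
      exact this
    refine Infinite.of_injective (fun a : Fin ν → ℤ => (⟨(a, a, n), by abel⟩ : Triple ν n)) ?_
    intro a b hab
    have := congrArg (fun p : Triple ν n => p.val.1) hab
    exact this
  obtain ⟨hd⟩ := nonempty_denumerable (Triple ν n)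
  set e : ℕ ≃ Triple ν n := (Denumerable.eqv (Triple ν n)).symm with hedef
  have hpart : ∀ k : ℕ, AEMeasurable (fun u => ∑ i ∈ Finset.range k,
      (c u (e i).val.1 * (starRingEnd ℂ) (c u (e i).val.2.1) * c u (e i).val.2.2))
      (volume.restrict (Set.Ioc 0 t)) := by
    intro k
    refine Finset.aemeasurable_fun_sum _ fun i _ => ?_
    refine AEMeasurable.mul (AEMeasurable.mul (hcm _) ?_) (hcm _)
    exact Complex.continuous_conj.measurable.comp_aemeasurable (hcm _)
  refine aemeasurable_of_tendsto_metrizable_ae atTop hpart ?_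
  refine (ae_restrict_iff' measurableSet_Ioc).2 (ae_of_all _ fun u hu => ?_)
  have hsum : Summable (fun p : Triple ν n =>
      c u p.val.1 * (starRingEnd ℂ) (c u p.val.2.1) * c u p.val.2.2) :=
    (dNLS_NLsummable ν hρ hC (fun m => hcb u hu.1.le (lt_of_le_of_lt hu.2 htT) m) n).1
  have hsum2 : Summable (fun i : ℕ =>
      c u (e i).val.1 * (starRingEnd ℂ) (c u (e i).val.2.1) * c u (e i).val.2.2) :=
    (e.summable_iff (f := fun p : Triple ν n =>
      c u p.val.1 * (starRingEnd ℂ) (c u p.val.2.1) * c u p.val.2.2)).2 hsum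
  have hts : ∑' i : ℕ, (c u (e i).val.1 * (starRingEnd ℂ) (c u (e i).val.2.1) *
      c u (e i).val.2.2) = NLterm ν (c u) n := by
    unfold NLterm
    exact Equiv.tsum_eq e (fun p : Triple ν n =>
      c u p.val.1 * (starRingEnd ℂ) (c u p.val.2.1) * c u p.val.2.2)
  have := hsum2.hasSum.tendsto_sum_nat
  rwa [hts] at this

end Helpers

theorem uniqueness_dNLS (ν : ℕ) (hν : 1 ≤ ν) (κ : ℝ) (hκ : 0 < κ) (hκ1 : κ ≤ 1)
    (ω : Fin ν → ℝ) (T : ℝ) (hT : 0 < T) (C₁ : ℝ) (hC₁ : 0 < C₁)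
    (c d : ℝ → (Fin ν → ℤ) → ℂ)
    (hinit : ∀ n : Fin ν → ℤ, c 0 n = d 0 n)
    (hcb : ∀ t, 0 ≤ t → t < T → ∀ n : Fin ν → ℤ,
      ‖c t n‖ ≤ C₁ * Real.exp (-(κ / 2) * l1 ν n))
    (hdb : ∀ t, 0 ≤ t → t < T → ∀ n : Fin ν → ℤ,
      ‖d t n‖ ≤ C₁ * Real.exp (-(κ / 2) * l1 ν n))
    (hci : ∀ t, 0 ≤ t → t < T → ∀ n : Fin ν → ℤ, c t n =
      Complex.exp (-Complex.I * ((frq ν ω n : ℝ) : ℂ) ^ 2 * (t : ℂ)) * c 0 n +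
        Complex.I * ((frq ν ω n : ℝ) : ℂ) *
          ∫ s in (0 : ℝ)..t,
            Complex.exp (-Complex.I * ((frq ν ω n : ℝ) : ℂ) ^ 2 * ((t : ℂ) - (s : ℂ))) *
              NLterm ν (c s) n)
    (hdi : ∀ t, 0 ≤ t → t < T → ∀ n : Fin ν → ℤ, d t n =
      Complex.exp (-Complex.I * ((frq ν ω n : ℝ) : ℂ) ^ 2 * (t : ℂ)) * d 0 n +
        Complex.I * ((frq ν ω n : ℝ) : ℂ) *
          ∫ s in (0 : ℝ)..t,
            Complex.exp (-Complex.I * ((frq ν ω n : ℝ) : ℂ) ^ 2 * ((t : ℂ) - (s : ℂ))) *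
              NLterm ν (d s) n) :
    ∀ t, 0 ≤ t →
      t < min T (1 / (36 * C₁ ^ 2 * Real.exp 1 * (12 / (κ / 2)) ^ (2 * ν + 1) * ∑ j, |ω j|)) →
      ∀ n : Fin ν → ℤ, c t n = d t n := by
  intro t ht0 htlt n₀
  set ρ : ℝ := κ / 2 with hρdef
  have hρ : 0 < ρ := by positivity
  have hρ2 : ρ ≤ 1/2 := by rw [hρdef]; linarith
  set Ω : ℝ := ∑ j, |ω j| with hΩdef
  have hΩ0 : 0 ≤ Ω := Finset.sum_nonneg fun _ _ => abs_nonneg _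
  have htT : t < T := lt_of_lt_of_le htlt (min_le_left _ _)
  by_cases hΩz : Ω = 0
  · exfalso
    have hz : 36 * C₁ ^ 2 * Real.exp 1 * (12 / (κ / 2)) ^ (2 * ν + 1) * Ω = 0 := by
      rw [hΩz]; ring
    have := lt_of_lt_of_le htlt (min_le_right _ _)
    rw [hz, div_zero] at this
    linarith
  have hΩpos : 0 < Ω := lt_of_le_of_ne hΩ0 (Ne.symm hΩz)
  by_cases ht0' : t = 0
  · subst ht0'; exact hinit n₀
  have htpos : 0 < t := lt_of_le_of_ne ht0 (Ne.symm ht0')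
  -- threshold
  set lam : ℝ := 36 * C₁ ^ 2 * Real.exp 1 * (12 / ρ) ^ (2 * ν + 1) * Ω with hlamdef
  have hlampos : 0 < lam := by
    rw [hlamdef]
    have := Real.exp_pos 1
    positivity
  have hlamt : lam * t < 1 := by
    have h2 := lt_of_lt_of_le htlt (min_le_right _ _)
    calc lam * t < lam * (1 / lam) := by exact mul_lt_mul_of_pos_left h2 hlampos
      _ = 1 := by field_simp
  -- the lattice sum
  set Qv : ℝ := ∑' m : Fin ν → ℤ, Real.exp (-(ρ/4) * l1 ν m) with hQdef
  have hσ4 : (0:ℝ) < ρ/4 := by linarith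
  have hQ0 : 0 ≤ Qv := tsum_nonneg fun _ => Real.exp_nonneg _
  have hQle : Qv ≤ (12/ρ)^ν := by
    have := dNLS_tsumPi ν hσ4 (by linarith : ρ/4 ≤ 1/2)
    have h3 : 3/(ρ/4) = 12/ρ := by field_simp; ring
    rw [hQdef]
    calc Qv ≤ (3/(ρ/4))^ν := this
      _ = (12/ρ)^ν := by rw [h3]
  set β : ℝ := ρ / (4*t) with hβdef
  have hβpos : 0 < β := by positivity
  set q : ℝ := 24 * C₁^2 * Qv^2 * Ω * t / ρ with hqdef
  have hq0 : 0 ≤ q := by positivity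
  have hq1 : q < 1 := by
    have hP0 : (0:ℝ) < (12/ρ)^ν := by positivity
    have hQsq : Qv^2 ≤ ((12/ρ)^ν)^2 := pow_le_pow_left₀ hQ0 hQle 2
    have h1 : q ≤ 24 * (C₁^2 * ((12/ρ)^ν)^2 * Ω * t) / ρ := by
      rw [hqdef]
      refine (div_le_div_iff_of_pos_right hρ).2 ?_
      nlinarith [mul_le_mul_of_nonneg_left hQsq
        (show (0:ℝ) ≤ 24 * C₁^2 * Ω * t by positivity)]
    have hexp : (12/ρ)^(2*ν+1) = ((12/ρ)^ν)^2 * (12/ρ) := by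
      rw [pow_succ]
      congr 1
      rw [two_mul, pow_add, sq]
    have he1 : (1:ℝ) ≤ Real.exp 1 := Real.one_le_exp (by norm_num)
    have h2 : 24 * (C₁^2 * ((12/ρ)^ν)^2 * Ω * t) / ρ ≤ lam * t := by
      have hlt : lam * t = 432 * Real.exp 1 * (C₁^2 * ((12/ρ)^ν)^2 * Ω * t) / ρ := by
        rw [hlamdef, hexp]
        field_simp
        ring
      rw [hlt]
      have hXpos : 0 ≤ C₁^2 * ((12/ρ)^ν)^2 * Ω * t := by positivity
      have : 24 * (C₁^2 * ((12/ρ)^ν)^2 * Ω * t) ≤ 432 * Real.exp 1 * (C₁^2 * ((12/ρ)^ν)^2 * Ω * t) := by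
        nlinarith
      exact (div_le_div_iff_of_pos_right hρ).2 this
    linarith [h1, h2, hlamt]
  -- measurability of the nonlinear terms
  have hmNLc := dNLS_meas ν hν ω htT htpos hρ hC₁.le c hcb hci
  have hmNLd := dNLS_meas ν hν ω htT htpos hρ hC₁.le d hdb hdi
  -- interval integrability of the Duhamel integrands
  have hIntGen : ∀ (e : ℝ → (Fin ν → ℤ) → ℂ),
      (∀ u, 0 ≤ u → u < T → ∀ m : Fin ν → ℤ,
        ‖e u m‖ ≤ C₁ * Real.exp (-ρ * l1 ν m)) →
      (∀ n : Fin ν → ℤ,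
        AEMeasurable (fun u => NLterm ν (e u) n) (volume.restrict (Set.Ioc 0 t))) →
      ∀ s, 0 ≤ s → s ≤ t → ∀ n : Fin ν → ℤ,
      IntervalIntegrable (fun x =>
        Complex.exp (-Complex.I * ((frq ν ω n : ℝ) : ℂ)^2 * ((s:ℂ) - (x:ℂ))) *
          NLterm ν (e x) n) volume 0 s := by
    intro e heb hmNL s hs0 hst n
    rw [intervalIntegrable_iff_integrableOn_Ioc_of_le hs0]
    have hsub : Set.Ioc (0:ℝ) s ⊆ Set.Ioc (0:ℝ) t := Set.Ioc_subset_Ioc le_rfl hst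
    have hmono : volume.restrict (Set.Ioc (0:ℝ) s) ≤ volume.restrict (Set.Ioc (0:ℝ) t) :=
      Measure.restrict_mono hsub le_rfl
    have hcontE : Continuous (fun x : ℝ =>
        Complex.exp (-Complex.I * ((frq ν ω n : ℝ) : ℂ)^2 * ((s:ℂ) - (x:ℂ)))) :=
      Complex.continuous_exp.comp
        (continuous_const.mul (continuous_const.sub Complex.continuous_ofReal))
    have hmeas : AEStronglyMeasurable (fun x : ℝ =>
        Complex.exp (-Complex.I * ((frq ν ω n : ℝ) : ℂ)^2 * ((s:ℂ) - (x:ℂ))) *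
          NLterm ν (e x) n) (volume.restrict (Set.Ioc 0 s)) := by
      refine AEMeasurable.aestronglyMeasurable ?_
      exact hcontE.aemeasurable.mul ((hmNL n).mono_measure hmono)
    refine Integrable.mono' (integrable_const (C₁^3 * Qv^2)) hmeas ?_
    refine (ae_restrict_iff' measurableSet_Ioc).2 (ae_of_all _ fun x hx => ?_)
    have hxT : x < T := lt_of_le_of_lt (hx.2.trans hst) htT
    rw [norm_mul]
    have hone : ‖Complex.exp (-Complex.I * ((frq ν ω n : ℝ) : ℂ)^2 * ((s:ℂ) - (x:ℂ)))‖ = 1 := by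
      have hcast : (s:ℂ) - (x:ℂ) = ((s - x : ℝ) : ℂ) := by push_cast; ring
      rw [hcast, dNLS_absExpI]
    rw [hone, one_mul]
    exact (dNLS_NLsummable ν hρ hC₁.le (fun m => heb x hx.1.le hxT m) n).2
  have hIntC := hIntGen c hcb hmNLc
  have hIntD := hIntGen d hdb hmNLd
  -- the iteration
  have key : ∀ j : ℕ, ∀ s, 0 ≤ s → s ≤ t → ∀ n : Fin ν → ℤ,
      ‖c s n - d s n‖ ≤ 2*C₁*q^j * Real.exp (-(3*ρ/4 - β*s) * l1 ν n) := by
    intro j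
    induction j with
    | zero =>
      intro s hs0 hst n
      have hsT : s < T := lt_of_le_of_lt hst htT
      have h1 := hcb s hs0 hsT n
      have h2 := hdb s hs0 hsT n
      have h3 : ‖c s n - d s n‖ ≤ 2*C₁*Real.exp (-ρ * l1 ν n) := by
        have := norm_sub_le (c s n) (d s n)
        linarith
      refine h3.trans ?_
      rw [pow_zero]
      have hback : Real.exp (-ρ * l1 ν n) ≤ Real.exp (-(3*ρ/4 - β*s) * l1 ν n) := by
        refine Real.exp_le_exp.2 ?_
        nlinarith [dNLS_l1_nonneg ν n, mul_nonneg hβpos.le hs0,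
          mul_nonneg (mul_nonneg hβpos.le hs0) (dNLS_l1_nonneg ν n),
          mul_nonneg hρ.le (dNLS_l1_nonneg ν n)]
      nlinarith [hC₁.le, Real.exp_nonneg (-ρ * l1 ν n)]
    | succ j ih =>
      intro s hs0 hst n
      have hsT : s < T := lt_of_le_of_lt hst htT
      set φ : ℝ := frq ν ω n with hφdef
      set L : ℝ := l1 ν n with hLdef
      have hL0 : 0 ≤ L := dNLS_l1_nonneg ν n
      set Fc : ℝ → ℂ := fun x =>
        Complex.exp (-Complex.I * (φ:ℂ)^2 * ((s:ℂ) - (x:ℂ))) * NLterm ν (c x) n with hFcdef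
      set Fd : ℝ → ℂ := fun x =>
        Complex.exp (-Complex.I * (φ:ℂ)^2 * ((s:ℂ) - (x:ℂ))) * NLterm ν (d x) n with hFddef
      have hFcInt : IntervalIntegrable Fc volume 0 s := hIntC s hs0 hst n
      have hFdInt : IntervalIntegrable Fd volume 0 s := hIntD s hs0 hst n
      have heq : c s n - d s n = Complex.I * (φ:ℂ) * ∫ x in (0:ℝ)..s, (Fc x - Fd x) := by
        rw [intervalIntegral.integral_sub hFcInt hFdInt]
        have h1 := hci s hs0 hsT n
        have h2 := hdi s hs0 hsT n
        rw [h1, h2, hinit n]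
        ring
      rw [heq, norm_mul]
      have habsI : ‖Complex.I * (φ:ℂ)‖ = |φ| := by
        rw [norm_mul]
        simp
      rw [habsI]
      have hφle : |φ| ≤ Ω * L := dNLS_frq_le ν ω n
      rcases eq_or_lt_of_le hL0 with hLz | hLpos
      · -- L = 0 forces φ = 0
        have hφ0 : |φ| = 0 := by
          have := hφle
          rw [← hLz, mul_zero] at this
          exact le_antisymm this (abs_nonneg _)
        rw [hφ0, zero_mul]
        positivity
      · -- main case
        set b : ℝ := β * L with hbdef
        have hbpos : 0 < b := mul_pos hβpos hLpos
        set M : ℝ := 6*C₁^3*q^j*Qv^2 * Real.exp (-(3*ρ/4) * L) with hMdef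
        have hM0 : 0 ≤ M := by positivity
        have hbound : ∀ x ∈ Set.uIoc (0:ℝ) s, ‖Fc x - Fd x‖ ≤ M * Real.exp (b*x) := by
          intro x hx
          rw [Set.uIoc_of_le hs0] at hx
          have hx0 : 0 < x := hx.1
          have hxs : x ≤ s := hx.2
          have hxT : x < T := lt_of_le_of_lt (hxs.trans hst) htT
          have hδ := ih x hx0.le (hxs.trans hst)
          have hα0 : 0 ≤ 3*ρ/4 - β*x := by
            have hxx : β * x ≤ β * t := mul_le_mul_of_nonneg_left (hxs.trans hst) hβpos.le
            have hβt : β * t = ρ/4 := by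
              rw [hβdef]; field_simp
            linarith
          have hαρ : (3*ρ/4 - β*x) + ρ/4 ≤ ρ := by
            nlinarith [mul_nonneg hβpos.le hx0.le]
          have hND := dNLS_NLdiff ν hρ hC₁.le hα0 hαρ
            (by positivity : (0:ℝ) ≤ 2*C₁*q^j)
            (fun m => hcb x hx0.le hxT m) (fun m => hdb x hx0.le hxT m)
            (fun m => hδ m) n
          have hnorm : ‖Fc x - Fd x‖ = ‖NLterm ν (c x) n - NLterm ν (d x) n‖ := by
            rw [hFcdef, hFddef]
            simp only
            rw [← mul_sub, norm_mul]
            have hone : ‖Complex.exp (-Complex.I * (φ:ℂ)^2 * ((s:ℂ) - (x:ℂ)))‖ = 1 := by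
              have hcast : (s:ℂ) - (x:ℂ) = ((s - x : ℝ) : ℂ) := by push_cast; ring
              rw [hcast, dNLS_absExpI]
            rw [hone, one_mul]
          rw [hnorm]
          refine hND.trans (le_of_eq ?_)
          rw [hMdef, hbdef]
          rw [show Real.exp (-(3*ρ/4 - β*x) * L) =
            Real.exp ((β*L)*x) * Real.exp (-(3*ρ/4)*L) by
              rw [← Real.exp_add]; congr 1; ring]
          ring
        have hGint : IntervalIntegrable (fun x => M * Real.exp (b*x)) volume 0 s := by
          refine Continuous.intervalIntegrable ?_ 0 s
          exact continuous_const.mul (Real.continuous_exp.comp (continuous_const.mul continuous_id))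
        have hIntBound : ‖∫ x in (0:ℝ)..s, (Fc x - Fd x)‖ ≤
            |∫ x in (0:ℝ)..s, M * Real.exp (b*x)| := by
          refine intervalIntegral.norm_integral_le_abs_of_norm_le ?_ hGint
          refine (ae_restrict_iff' measurableSet_uIoc).2 (ae_of_all _ fun x hx => hbound x hx)
        have hIval : ∫ x in (0:ℝ)..s, M * Real.exp (b*x) =
            M * ((Real.exp (b*s) - 1)/b) := by
          rw [intervalIntegral.integral_const_mul, dNLS_intexp hbpos]
        have hint_nonneg : 0 ≤ (Real.exp (b*s) - 1)/b := by
          have : 1 ≤ Real.exp (b*s) := Real.one_le_exp (by positivity)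
          have h2 : 0 ≤ Real.exp (b*s) - 1 := by linarith
          positivity
        have habs_int : |∫ x in (0:ℝ)..s, M * Real.exp (b*x)| =
            M * ((Real.exp (b*s) - 1)/b) := by
          rw [hIval, abs_of_nonneg (mul_nonneg hM0 hint_nonneg)]
        calc |φ| * ‖∫ x in (0:ℝ)..s, (Fc x - Fd x)‖
            ≤ (Ω * L) * (M * ((Real.exp (b*s) - 1)/b)) := by
              refine mul_le_mul hφle ?_ (norm_nonneg _) (by positivity)
              rw [← habs_int]
              exact hIntBound
          _ = Ω * M * ((Real.exp (b*s) - 1)/β) := by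
              rw [hbdef]
              field_simp
          _ ≤ Ω * M * (Real.exp (b*s)/β) := by
              refine mul_le_mul_of_nonneg_left ?_ (mul_nonneg hΩ0 hM0)
              refine (div_le_div_iff_of_pos_right hβpos).2 ?_
              linarith
          _ = C₁ * q^(j+1) * Real.exp (-(3*ρ/4 - β*s) * L) := by
              rw [show Real.exp (-(3*ρ/4 - β*s) * L) =
                Real.exp (-(3*ρ/4)*L) * Real.exp (b*s) by
                  rw [hbdef, ← Real.exp_add]; congr 1; ring]
              rw [hMdef, hqdef, hβdef, pow_succ]
              field_simp
              have hX : ρ * (Ω * C₁ ^ 2 * 24 * Qv ^ 2 * t / ρ) = Ω * C₁ ^ 2 * 24 * Qv ^ 2 * t :=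
                mul_div_cancel₀ _ hρ.ne'
              linear_combination -(Ω * C₁ ^ 2 * 24 * Qv ^ 2 * t / ρ) ^ j * hX
          _ ≤ 2*C₁*q^(j+1) * Real.exp (-(3*ρ/4 - β*s) * L) := by
              nlinarith [Real.exp_nonneg (-(3*ρ/4 - β*s) * L), hC₁.le,
                pow_nonneg hq0 (j+1), mul_nonneg (mul_nonneg hC₁.le (pow_nonneg hq0 (j+1)))
                  (Real.exp_nonneg (-(3*ρ/4 - β*s) * L))]
  -- conclude by letting j → ∞
  have hlim : Filter.Tendsto (fun j : ℕ => 2*C₁*q^j * Real.exp (-(3*ρ/4 - β*t) * l1 ν n₀))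
      Filter.atTop (𝓝 0) := by
    have h1 : Filter.Tendsto (fun j : ℕ => q^j) Filter.atTop (𝓝 0) :=
      tendsto_pow_atTop_nhds_zero_of_lt_one hq0 hq1
    have h2 := (h1.const_mul (2*C₁)).mul_const (Real.exp (-(3*ρ/4 - β*t) * l1 ν n₀))
    simpa using h2
  have habs0 : ‖c t n₀ - d t n₀‖ ≤ 0 := by
    refine ge_of_tendsto hlim (Filter.Eventually.of_forall fun j => ?_)
    exact key j t ht0 le_rfl n₀
  have habs : ‖c t n₀ - d t n₀‖ = 0 :=
    le_antisymm habs0 (norm_nonneg _)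
  have : c t n₀ - d t n₀ = 0 := by
    rwa [norm_eq_zero] at habs
  exact sub_eq_zero.1 this
end
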